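/- For all n, m ≥ 1, the following are equivalent: (1) every finite system of non-commutative polynomial equations with integer coefficients (in any number of variables) that is solvable in M_n(ℚ) is also solvable in M_m(ℚ); (2) n divides m. -/

import Mathlib

open Matrix FreeAlgebra

lemma stmt8_sum_mulVec {m : ℕ} {ι : Type*} (s : Finset ι) (E : ι → Matrix (Fin m) (Fin m) ℚ)
    (v : Fin m → ℚ) : (∑ i ∈ s, E i).mulVec v = ∑ i ∈ s, (E i).mulVec v := by
  ext x
  simp [Matrix.mulVec, dotProduct, Finset.sum_mul, Finset.sum_apply, Matrix.sum_apply]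
  rw [Finset.sum_comm]

lemma stmt8_matrixUnits_dvd (n m : ℕ) (hn : 1 ≤ n)
    (E : Fin n → Fin n → Matrix (Fin m) (Fin m) ℚ)
    (hmul : ∀ i j k l, E i j * E k l = if j = k then E i l else 0)
    (hsum : ∑ i, E i i = 1) : n ∣ m := by
  set z : Fin n := ⟨0, hn⟩ with hz
  set W := LinearMap.range (Matrix.mulVecLin (E z z)) with hW
  have hmem : ∀ (i : Fin n) (v : Fin m → ℚ), (E z i).mulVecLin v ∈ W := by
    intro i v
    refine ⟨(E z i).mulVec v, ?_⟩
    rw [mulVecLin_apply, mulVecLin_apply, mulVec_mulVec, hmul, if_pos rfl]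
  set f : (Fin m → ℚ) →ₗ[ℚ] (Fin n → W) :=
    LinearMap.pi (fun i => LinearMap.codRestrict W ((E z i).mulVecLin) (hmem i)) with hf
  set g : (Fin n → W) →ₗ[ℚ] (Fin m → ℚ) :=
    ∑ i, ((E i z).mulVecLin).comp (W.subtype.comp (LinearMap.proj i)) with hg
  have hgf : ∀ v, g (f v) = v := by
    intro v
    simp only [hg, hf, LinearMap.sum_apply, LinearMap.comp_apply, LinearMap.proj_apply,
      LinearMap.pi_apply, Submodule.coe_subtype, LinearMap.codRestrict_apply,
      mulVecLin_apply, mulVec_mulVec, hmul, if_pos rfl, if_true]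
    rw [← stmt8_sum_mulVec, hsum, Matrix.one_mulVec]
  have hfg : ∀ w, f (g w) = w := by
    intro w
    funext i
    have hwi : (E z z).mulVec (w i : Fin m → ℚ) = (w i : Fin m → ℚ) := by
      obtain ⟨u, hu⟩ := (w i).2
      rw [← hu, mulVecLin_apply, mulVec_mulVec, hmul, if_pos rfl]
    apply Subtype.ext
    simp only [hf, hg, LinearMap.pi_apply, LinearMap.codRestrict_apply, mulVecLin_apply,
      LinearMap.sum_apply, LinearMap.comp_apply, LinearMap.proj_apply, Submodule.coe_subtype]
    rw [show ((E z i).mulVec (∑ j, (E j z).mulVec (w j : Fin m → ℚ)))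
        = ∑ j, (E z i).mulVec ((E j z).mulVec (w j : Fin m → ℚ)) by
      rw [← mulVecLin_apply, map_sum]
      simp only [mulVecLin_apply]]
    have : ∀ j : Fin n, (E z i).mulVec ((E j z).mulVec (w j : Fin m → ℚ))
        = if i = j then (E z z).mulVec (w j : Fin m → ℚ) else 0 := by
      intro j
      rw [mulVec_mulVec, hmul]
      split_ifs with h <;> simp
    simp only [this]
    rw [Finset.sum_ite_eq Finset.univ i
      (fun j => (E z z).mulVec (w j : Fin m → ℚ)), if_pos (Finset.mem_univ i), hwi]
  have heq : (Fin m → ℚ) ≃ₗ[ℚ] (Fin n → W) :=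
    LinearEquiv.ofLinear f g (LinearMap.ext hfg) (LinearMap.ext hgf)
  have hfin := heq.finrank_eq
  rw [Module.finrank_fin_fun, Module.finrank_pi_fintype, Finset.sum_const,
    Finset.card_univ, Fintype.card_fin, smul_eq_mul] at hfin
  exact ⟨Module.finrank ℚ W, hfin⟩

lemma stmt8_lift_rel_eq {k : ℕ} {A : Type*} [Ring A] [Algebra ℤ A] (X : Fin k → A)
    (p q r : Fin k) (c : Prop) [Decidable c] :
    FreeAlgebra.lift ℤ X (ι ℤ p * ι ℤ q - if c then ι ℤ r else 0)
      = X p * X q - if c then X r else 0 := by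
  simp [apply_ite (FreeAlgebra.lift ℤ X)]

lemma stmt8_sum_stdBasis_eq_one (n : ℕ) :
    ∑ i : Fin n, Matrix.single i i (1 : ℚ) = 1 := by
  ext a b
  simp only [Matrix.sum_apply, Matrix.single, Matrix.of_apply, Matrix.one_apply]
  by_cases h : a = b
  · subst h; simp
  · simp only [h, if_false]
    rw [Finset.sum_eq_zero fun x _ => ?_]
    rw [if_neg]
    rintro ⟨rfl, rfl⟩
    exact h rfl

/-- For `n, m ≥ 1`: every finite system of non-commutative polynomial equations with
integer coefficients solvable in `M_n(ℚ)` is also solvable in `M_m(ℚ)` if and only if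
`n ∣ m`. -/
theorem stmt8 (n m : ℕ) (hn : 1 ≤ n) (hm : 1 ≤ m) :
    (∀ (k s : ℕ) (P : Fin s → FreeAlgebra ℤ (Fin k)),
      (∃ X : Fin k → Matrix (Fin n) (Fin n) ℚ,
        ∀ j : Fin s, FreeAlgebra.lift ℤ X (P j) = 0) →
      (∃ Y : Fin k → Matrix (Fin m) (Fin m) ℚ,
        ∀ j : Fin s, FreeAlgebra.lift ℤ Y (P j) = 0))
    ↔ n ∣ m := by
  constructor
  · intro h
    set e : Fin n × Fin n ≃ Fin (n * n) := finProdFinEquiv with he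
    set rel : Fin (n * n) → Fin (n * n) → FreeAlgebra ℤ (Fin (n * n)) := fun p q =>
      ι ℤ p * ι ℤ q -
        if (e.symm p).2 = (e.symm q).1
        then ι ℤ (e ((e.symm p).1, (e.symm q).2)) else 0 with hrel
    set P : Fin (n * n * (n * n) + 1) → FreeAlgebra ℤ (Fin (n * n)) := fun j =>
      if hj : (j : ℕ) < n * n * (n * n)
      then rel (finProdFinEquiv.symm (⟨j, hj⟩ : Fin (n * n * (n * n)))).1
        (finProdFinEquiv.symm (⟨j, hj⟩ : Fin (n * n * (n * n)))).2
      else (∑ i : Fin n, ι ℤ (e (i, i))) - 1 with hP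
    set X : Fin (n * n) → Matrix (Fin n) (Fin n) ℚ := fun v =>
      Matrix.single (e.symm v).1 (e.symm v).2 1 with hX
    have hXmul : ∀ p q : Fin (n * n),
        X p * X q = if (e.symm p).2 = (e.symm q).1
          then X (e ((e.symm p).1, (e.symm q).2)) else 0 := by
      intro p q
      by_cases hc : (e.symm p).2 = (e.symm q).1
      · rw [if_pos hc]
        simp only [hX, Equiv.symm_apply_apply]
        rw [← hc, Matrix.single_mul_single_same, one_mul]
      · rw [if_neg hc]
        simp only [hX]
        exact Matrix.single_mul_single_of_ne (h := hc) (d := 1) ..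
    have hsolv : ∃ X : Fin (n * n) → Matrix (Fin n) (Fin n) ℚ,
        ∀ j, FreeAlgebra.lift ℤ X (P j) = 0 := by
      refine ⟨X, fun j => ?_⟩
      by_cases hj : (j : ℕ) < n * n * (n * n)
      · rw [hP]
        simp only [hj, dif_pos]
        rw [hrel, stmt8_lift_rel_eq, hXmul, sub_self]
      · rw [hP]
        simp only [hj, dif_neg, not_false_iff]
        rw [map_sub, map_sum, _root_.map_one]
        simp only [FreeAlgebra.lift_ι_apply, hX, Equiv.symm_apply_apply]
        rw [stmt8_sum_stdBasis_eq_one n, sub_self]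
    obtain ⟨Y, hY⟩ := h (n * n) (n * n * (n * n) + 1) P hsolv
    have hYrel : ∀ p q : Fin (n * n),
        Y p * Y q = if (e.symm p).2 = (e.symm q).1
          then Y (e ((e.symm p).1, (e.symm q).2)) else 0 := by
      intro p q
      have hlt : ((finProdFinEquiv (p, q) : Fin (n * n * (n * n))) : ℕ) < n * n * (n * n) :=
        (finProdFinEquiv (p, q)).2
      have := hY ⟨(finProdFinEquiv (p, q) : Fin (n * n * (n * n))), Nat.lt_succ_of_lt hlt⟩
      rw [hP] at this
      simp only [hlt, dif_pos] at this
      rw [show (⟨((finProdFinEquiv (p, q) : Fin (n * n * (n * n))) : ℕ), hlt⟩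
          : Fin (n * n * (n * n))) = finProdFinEquiv (p, q) from rfl,
        Equiv.symm_apply_apply] at this
      rw [hrel, stmt8_lift_rel_eq] at this
      exact sub_eq_zero.mp this
    have hYsum : ∑ i : Fin n, Y (e (i, i)) = 1 := by
      have := hY ⟨n * n * (n * n), Nat.lt_succ_self _⟩
      rw [hP] at this
      simp only [lt_irrefl, dif_neg, not_false_iff] at this
      rw [map_sub, map_sum, _root_.map_one] at this
      simp only [FreeAlgebra.lift_ι_apply] at this
      exact sub_eq_zero.mp this
    refine stmt8_matrixUnits_dvd n m hn (fun i j => Y (e (i, j))) (fun i j k l => ?_) hYsum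
    have := hYrel (e (i, j)) (e (k, l))
    simpa only [Equiv.symm_apply_apply] using this
  · intro hd
    obtain ⟨q, rfl⟩ := hd
    rintro k s P ⟨X, hX⟩
    let F : Matrix (Fin n) (Fin n) ℚ →+* Matrix (Fin (n * q)) (Fin (n * q)) ℚ :=
      ((Matrix.reindexAlgEquiv ℚ ℚ finProdFinEquiv).toRingEquiv.toRingHom).comp
        ((Matrix.blockDiagonalRingHom (Fin n) (Fin q) ℚ).comp
          (Pi.constRingHom (Fin q) (Matrix (Fin n) (Fin n) ℚ)))
    have key : (FreeAlgebra.lift ℤ (fun v => F (X v)))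
        = (F.toIntAlgHom).comp (FreeAlgebra.lift ℤ X) := by
      apply FreeAlgebra.hom_ext
      funext v
      simp [FreeAlgebra.lift_ι_apply]
      exact (congrArg F (FreeAlgebra.lift_ι_apply X v)).symm
    refine ⟨fun v => F (X v), fun j => ?_⟩
    rw [key]
    show F (FreeAlgebra.lift ℤ X (P j)) = 0
    rw [hX j, map_zero]
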